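/- Let N_t ≥ N_r ≥ 1 be integers. For R ≥ 0 let D_R := { λ ∈ ℝ^{N_r} : λ_i > 0 for all i, and ∏_{i=1}^{N_r} (1 + λ_i) ≤ 2^R }, and define F(R) := ∫_{D_R} ( ∏_{1 ≤ i < j ≤ N_r} (λ_j − λ_i) )² · ∏_{i=1}^{N_r} λ_i^{N_t − N_r} dλ₁ ⋯ dλ_{N_r}. Then F is a monotonically nondecreasing and convex function of R on [0, ∞). -/

import Mathlib

open MeasureTheory Finset ENNReal

namespace OutageThm6

variable (Nt Nr : ℕ)

/-- The integrand of the outage integral. -/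
noncomputable def P (v : Fin Nr → ℝ) : ℝ :=
  (∏ i, ∏ j ∈ Ioi i, (v j - v i)) ^ 2 * ∏ i, v i ^ (Nt - Nr)

/-- The outage region `D_R`. -/
def A (R : ℝ) : Set (Fin Nr → ℝ) :=
  {v | (∀ i, 0 < v i) ∧ ∏ i, (1 + v i) ≤ (2 : ℝ) ^ R}

/-- The Lebesgue lintegral of the integrand over the outage region. -/
noncomputable def L (R : ℝ) : ℝ≥0∞ := ∫⁻ v in A Nr R, ENNReal.ofReal (P Nt Nr v)

lemma continuous_P : Continuous (P Nt Nr) := by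
  unfold P
  apply Continuous.mul
  · exact (continuous_finset_prod _ fun i _ => continuous_finset_prod _ fun j _ =>
      (continuous_apply j).sub (continuous_apply i)).pow 2
  · exact continuous_finset_prod _ fun i _ => (continuous_apply i).pow _

lemma P_nonneg {v : Fin Nr → ℝ} (hv : ∀ i, 0 ≤ v i) : 0 ≤ P Nt Nr v :=
  mul_nonneg (sq_nonneg _) (Finset.prod_nonneg fun i _ => pow_nonneg (hv i) _)

lemma measurableSet_A (R : ℝ) : MeasurableSet (A Nr R) := by
  have h1 : MeasurableSet {v : Fin Nr → ℝ | ∀ i, 0 < v i} := by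
    rw [Set.setOf_forall]
    exact MeasurableSet.iInter fun i => measurableSet_lt measurable_const (measurable_pi_apply i)
  have h2 : MeasurableSet {v : Fin Nr → ℝ | ∏ i, (1 + v i) ≤ (2 : ℝ) ^ R} :=
    measurableSet_le (Finset.measurable_prod _ fun i _ =>
      measurable_const.add (measurable_pi_apply i)) measurable_const
  exact (h1.inter h2 : _)

lemma A_mono {R₁ R₂ : ℝ} (h : R₁ ≤ R₂) : A Nr R₁ ⊆ A Nr R₂ := fun v hv =>
  ⟨hv.1, hv.2.trans (Real.rpow_le_rpow_of_exponent_le one_le_two h)⟩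

lemma A_subset_Icc (R : ℝ) : A Nr R ⊆ Set.Icc 0 (fun _ => (2 : ℝ) ^ R) := by
  rintro v ⟨hpos, hle⟩
  constructor
  · intro i; exact (hpos i).le
  · intro i
    have he : (1 + v i) * ∏ j ∈ Finset.univ.erase i, (1 + v j) = ∏ j, (1 + v j) :=
      Finset.mul_prod_erase Finset.univ (fun j => 1 + v j) (Finset.mem_univ i)
    have hge : (1 : ℝ) ≤ ∏ j ∈ Finset.univ.erase i, (1 + v j) := by
      calc (1:ℝ) = ∏ _j ∈ Finset.univ.erase i, (1:ℝ) := by simp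
        _ ≤ ∏ j ∈ Finset.univ.erase i, (1 + v j) :=
            Finset.prod_le_prod (fun j _ => zero_le_one) (fun j _ => by linarith [hpos j])
    have h1 : (1 : ℝ) + v i ≤ ∏ j, (1 + v j) := by
      rw [← he]
      nlinarith [hpos i]
    have := h1.trans hle
    simp only
    linarith

lemma L_lt_top (R : ℝ) : L Nt Nr R < ⊤ := by
  obtain ⟨C, hC⟩ := (isCompact_Icc (a := (0 : Fin Nr → ℝ))
    (b := fun _ => (2 : ℝ) ^ R)).exists_bound_of_continuousOn (continuous_P Nt Nr).continuousOn
  calc L Nt Nr R ≤ ∫⁻ v in Set.Icc 0 (fun _ => (2 : ℝ) ^ R), ENNReal.ofReal (P Nt Nr v) :=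
        lintegral_mono_set (A_subset_Icc Nr R)
    _ ≤ ∫⁻ _ in Set.Icc 0 (fun _ => (2 : ℝ) ^ R), ENNReal.ofReal C := by
        apply setLIntegral_mono measurable_const
        intro v hv
        exact ENNReal.ofReal_le_ofReal ((le_abs_self _).trans (hC v hv))
    _ = ENNReal.ofReal C * volume (Set.Icc 0 (fun _ => (2 : ℝ) ^ R)) := by
        rw [setLIntegral_const]
    _ < ⊤ := ENNReal.mul_lt_top ENNReal.ofReal_lt_top isCompact_Icc.measure_lt_top

lemma F_eq (R : ℝ) :
    ∫ v in A Nr R, P Nt Nr v = (L Nt Nr R).toReal := by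
  unfold L
  rw [← integral_eq_lintegral_of_nonneg_ae]
  · exact (ae_restrict_iff' (measurableSet_A Nr R)).2 (ae_of_all _ fun v hv =>
      P_nonneg Nt Nr fun i => (hv.1 i).le)
  · exact (continuous_P Nt Nr).aestronglyMeasurable

lemma P_le_P_comp {a : ℝ} (ha : 1 ≤ a) {v : Fin Nr → ℝ} (hv : ∀ i, 0 < v i) :
    P Nt Nr v ≤ P Nt Nr (fun i => a * v i + (a - 1)) := by
  set w : Fin Nr → ℝ := fun i => a * v i + (a - 1) with hw
  have hvw : ∀ i, v i ≤ w i := by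
    intro i; rw [hw]; dsimp; nlinarith [(hv i).le]
  have sq_prod : ∀ u : Fin Nr → ℝ,
      (∏ i, ∏ j ∈ Ioi i, (u j - u i)) ^ 2 = ∏ i, ∏ j ∈ Ioi i, (u j - u i) ^ 2 := by
    intro u
    rw [← Finset.prod_pow]
    exact Finset.prod_congr rfl fun i _ => (Finset.prod_pow _ _ _).symm
  unfold P
  apply mul_le_mul
  · rw [sq_prod, sq_prod]
    apply Finset.prod_le_prod
    · intro i _
      exact Finset.prod_nonneg fun j _ => sq_nonneg _
    · intro i _
      apply Finset.prod_le_prod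
      · intro j _; exact sq_nonneg _
      · intro j _
        have h1 : w j - w i = a * (v j - v i) := by rw [hw]; dsimp; ring
        rw [h1, mul_pow]
        have ha2 : (1:ℝ) ≤ a ^ 2 := by nlinarith
        nlinarith [sq_nonneg (v j - v i), mul_le_mul_of_nonneg_right ha2 (sq_nonneg (v j - v i))]
  · apply Finset.prod_le_prod
    · intro i _; exact pow_nonneg (hv i).le _
    · intro i _
      exact pow_le_pow_left₀ (hv i).le (hvw i) _
  · exact Finset.prod_nonneg fun i _ => pow_nonneg (hv i).le _
  · exact sq_nonneg _

/-- Key inequality: the weighted measure of the slab `A (x+h) \ A x` is nondecreasing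
in the starting point `x`, proved via the change of variables `v ↦ a v + (a-1)`
with `a = 2^((y-x)/Nr)`. -/
lemma slab_le (hNr : 1 ≤ Nr) {x y h : ℝ} (hxy : x ≤ y) :
    ∫⁻ v in A Nr (x + h) \ A Nr x, ENNReal.ofReal (P Nt Nr v)
      ≤ ∫⁻ v in A Nr (y + h) \ A Nr y, ENNReal.ofReal (P Nt Nr v) := by
  have hNr0 : (Nr:ℝ) ≠ 0 := Nat.cast_ne_zero.2 (by omega)
  set e : ℝ := (y - x) / Nr with he
  have he0 : 0 ≤ e := div_nonneg (by linarith) (Nat.cast_nonneg _)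
  set a : ℝ := (2:ℝ) ^ e with ha
  have ha1 : 1 ≤ a := Real.one_le_rpow one_le_two he0
  have ha0 : 0 < a := lt_of_lt_of_le one_pos ha1
  have haN : a ^ Nr = (2:ℝ) ^ (y - x) := by
    rw [ha, ← Real.rpow_natCast ((2:ℝ) ^ e) Nr, ← Real.rpow_mul (by norm_num : (0:ℝ) ≤ 2)]
    congr 1
    rw [he, div_mul_cancel₀ _ hNr0]
  set c : Fin Nr → ℝ := fun _ => a - 1 with hc
  set φ : (Fin Nr → ℝ) → (Fin Nr → ℝ) := fun v => a • v + c with hφ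
  have hφ_apply : ∀ v i, φ v i = a * v i + (a - 1) := fun v i => rfl
  set S₁ := A Nr (x + h) \ A Nr x with hS₁
  set S₂ := A Nr (y + h) \ A Nr y with hS₂
  have hS₁m : MeasurableSet S₁ := (measurableSet_A Nr _).diff (measurableSet_A Nr _)
  have h2pos : (0:ℝ) < (2:ℝ) ^ (y - x) := Real.rpow_pos_of_pos two_pos _
  have himg : φ '' S₁ ⊆ S₂ := by
    rintro _ ⟨v, ⟨⟨hpos, hle⟩, hnot⟩, rfl⟩
    have hgt : (2:ℝ) ^ x < ∏ i, (1 + v i) :=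
      not_le.mp fun hle' => hnot ⟨hpos, hle'⟩
    have hprodw : ∏ i, (1 + φ v i) = (2:ℝ) ^ (y - x) * ∏ i, (1 + v i) := by
      have h1 : ∀ i : Fin Nr, 1 + φ v i = a * (1 + v i) := by
        intro i; rw [hφ_apply]; ring
      rw [Finset.prod_congr rfl fun i _ => h1 i, Finset.prod_mul_distrib,
        Finset.prod_const, Finset.card_univ, Fintype.card_fin, haN]
    constructor
    · constructor
      · intro i
        rw [hφ_apply]
        nlinarith [hpos i]
      · rw [hprodw]
        calc (2:ℝ) ^ (y - x) * ∏ i, (1 + v i) ≤ (2:ℝ) ^ (y - x) * (2:ℝ) ^ (x + h) :=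
              mul_le_mul_of_nonneg_left hle h2pos.le
          _ = (2:ℝ) ^ (y + h) := by
              rw [← Real.rpow_add two_pos]; congr 1; ring
    · rintro ⟨-, hle'⟩
      rw [hprodw] at hle'
      have h3 : (2:ℝ) ^ (y - x) * (2:ℝ) ^ x = (2:ℝ) ^ y := by
        rw [← Real.rpow_add two_pos]; congr 1; ring
      nlinarith [mul_lt_mul_of_pos_left hgt h2pos]
  set f' : (Fin Nr → ℝ) →L[ℝ] (Fin Nr → ℝ) := a • ContinuousLinearMap.id ℝ (Fin Nr → ℝ)
    with hf'
  have hder : ∀ v ∈ S₁, HasFDerivWithinAt φ f' S₁ v := fun v _ =>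
    (((hasFDerivAt_id v).const_smul a).add_const c).hasFDerivWithinAt
  have hinj : Set.InjOn φ S₁ := by
    intro u _ v _ huv
    funext i
    have h1 := congrFun huv i
    rw [hφ_apply, hφ_apply] at h1
    exact mul_left_cancel₀ ha0.ne' (add_right_cancel h1)
  have hdet : f'.det = a ^ Nr := by
    rw [hf', ContinuousLinearMap.det]
    simp [LinearMap.det_smul, Module.finrank_fintype_fun_eq_card]
  have hφcont : Continuous φ := by
    rw [hφ]; exact ((continuous_const (y := a)).smul (continuous_id : Continuous (id : (Fin Nr → ℝ) → (Fin Nr → ℝ)))).add continuous_const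
  calc ∫⁻ v in S₁, ENNReal.ofReal (P Nt Nr v)
      ≤ ∫⁻ v in S₁, ENNReal.ofReal |f'.det| * ENNReal.ofReal (P Nt Nr (φ v)) := by
        apply setLIntegral_mono
        · exact measurable_const.mul (ENNReal.measurable_ofReal.comp
            ((continuous_P Nt Nr).comp hφcont).measurable)
        · intro v hv
          have hpos : ∀ i, 0 < v i := hv.1.1
          have h1 : P Nt Nr v ≤ P Nt Nr (φ v) := P_le_P_comp Nt Nr ha1 hpos
          have h2 : (1:ℝ≥0∞) ≤ ENNReal.ofReal |f'.det| := by
            rw [ENNReal.one_le_ofReal, hdet, abs_of_pos (pow_pos ha0 _)]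
            exact one_le_pow₀ ha1
          calc ENNReal.ofReal (P Nt Nr v) ≤ ENNReal.ofReal (P Nt Nr (φ v)) :=
                ENNReal.ofReal_le_ofReal h1
            _ ≤ ENNReal.ofReal |f'.det| * ENNReal.ofReal (P Nt Nr (φ v)) :=
                le_mul_of_one_le_left zero_le h2
    _ = ∫⁻ v in φ '' S₁, ENNReal.ofReal (P Nt Nr v) :=
        (lintegral_image_eq_lintegral_abs_det_fderiv_mul volume hS₁m
          (fun v hv => hder v hv) hinj (fun v => ENNReal.ofReal (P Nt Nr v))).symm
    _ ≤ ∫⁻ v in S₂, ENNReal.ofReal (P Nt Nr v) := lintegral_mono_set himg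

/-- Decomposition of the lintegral into the part below `u` and the slab. -/
lemma L_add {u h : ℝ} (hh : 0 ≤ h) :
    L Nt Nr (u + h) = L Nt Nr u
      + ∫⁻ v in A Nr (u + h) \ A Nr u, ENNReal.ofReal (P Nt Nr v) := by
  unfold L
  rw [← lintegral_union ((measurableSet_A Nr _).diff (measurableSet_A Nr _))
    disjoint_sdiff_self_right,
    Set.union_diff_cancel (A_mono Nr (le_add_of_nonneg_right hh))]

/-- The monotone difference (Wright convexity) property of `F = toReal ∘ L`. -/
lemma wright (hNr : 1 ≤ Nr) {u v h : ℝ} (huv : u ≤ v) (hh : 0 ≤ h) :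
    (L Nt Nr (u + h)).toReal - (L Nt Nr u).toReal
      ≤ (L Nt Nr (v + h)).toReal - (L Nt Nr v).toReal := by
  have hu_top : L Nt Nr u ≠ ⊤ := (L_lt_top Nt Nr u).ne
  have hv_top : L Nt Nr v ≠ ⊤ := (L_lt_top Nt Nr v).ne
  have hsu : (∫⁻ w in A Nr (u + h) \ A Nr u, ENNReal.ofReal (P Nt Nr w)) ≠ ⊤ := by
    refine ne_top_of_le_ne_top (L_lt_top Nt Nr (u + h)).ne ?_
    exact lintegral_mono_set Set.diff_subset
  have hsv : (∫⁻ w in A Nr (v + h) \ A Nr v, ENNReal.ofReal (P Nt Nr w)) ≠ ⊤ := by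
    refine ne_top_of_le_ne_top (L_lt_top Nt Nr (v + h)).ne ?_
    exact lintegral_mono_set Set.diff_subset
  rw [L_add Nt Nr hh, L_add Nt Nr hh, ENNReal.toReal_add hu_top hsu,
    ENNReal.toReal_add hv_top hsv]
  have hle := slab_le Nt Nr hNr (h := h) huv
  have := ENNReal.toReal_mono hsv hle
  linarith

/-- A monotone function on `[0,∞)` satisfying the Wright-convexity property
(increments over intervals of equal length are nondecreasing in the starting point)
is convex on `[0,∞)`. -/
lemma convexOn_of_wright (F : ℝ → ℝ)
    (mono : ∀ u v : ℝ, 0 ≤ u → u ≤ v → F u ≤ F v)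
    (wright : ∀ u v h : ℝ, 0 ≤ u → u ≤ v → 0 ≤ h → F (u + h) - F u ≤ F (v + h) - F v) :
    ConvexOn ℝ (Set.Ici 0) F := by
  apply convexOn_of_slope_mono_adjacent (convex_Ici 0)
  intro x y z hx hz hxy hyz
  have hx0 : (0:ℝ) ≤ x := hx
  have hy0 : (0:ℝ) ≤ y := le_trans hx0 hxy.le
  have hyx : 0 < y - x := by linarith
  have hzy : 0 < z - y := by linarith
  rw [div_le_div_iff₀ hyx hzy]
  have hFyx : 0 ≤ F y - F x := by linarith [mono x y hx0 hxy.le]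
  have hFzy : 0 ≤ F z - F y := by linarith [mono y z hy0 hyz.le]
  refine le_of_forall_pos_le_add ?_
  intro ε hε
  set p : ℕ := ⌈max ((y - x) / (z - y)) ((y - x) * (F y - F x) / ε)⌉₊ + 1 with hp_def
  have hp0 : 0 < (p:ℝ) := by positivity
  have hp1 : (y - x) / (z - y) ≤ (p:ℝ) := by
    calc (y - x) / (z - y) ≤ max ((y - x) / (z - y)) ((y - x) * (F y - F x) / ε) := le_max_left _ _
      _ ≤ (⌈max ((y - x) / (z - y)) ((y - x) * (F y - F x) / ε)⌉₊ : ℝ) := Nat.le_ceil _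
      _ ≤ (p:ℝ) := by rw [hp_def]; push_cast; linarith
  have hp2 : (y - x) * (F y - F x) / ε ≤ (p:ℝ) := by
    calc (y - x) * (F y - F x) / ε ≤ max ((y - x) / (z - y)) ((y - x) * (F y - F x) / ε) :=
          le_max_right _ _
      _ ≤ (⌈max ((y - x) / (z - y)) ((y - x) * (F y - F x) / ε)⌉₊ : ℝ) := Nat.le_ceil _
      _ ≤ (p:ℝ) := by rw [hp_def]; push_cast; linarith
  clear_value p
  set d : ℝ := (y - x) / p with hd_def
  have hd0 : 0 < d := div_pos hyx hp0
  have hpd : (p:ℝ) * d = y - x := by rw [hd_def]; field_simp [hp0.ne']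
  have hdz : d ≤ z - y := by
    rw [hd_def, div_le_iff₀ hp0]
    calc y - x = ((y - x) / (z - y)) * (z - y) := by field_simp
      _ ≤ (p:ℝ) * (z - y) := by
          apply mul_le_mul_of_nonneg_right hp1 hzy.le
      _ = (z - y) * p := by ring
  have hdε : d * (F y - F x) ≤ ε := by
    rw [hd_def, div_mul_eq_mul_div, div_le_iff₀ hp0]
    calc (y - x) * (F y - F x) = ((y - x) * (F y - F x) / ε) * ε := by field_simp
      _ ≤ (p:ℝ) * ε := mul_le_mul_of_nonneg_right hp2 hε.le
      _ = ε * p := by ring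
  set q : ℕ := ⌊(z - y) / d⌋₊ with hq_def
  clear_value q
  have hq1 : (1:ℝ) ≤ (q:ℝ) := by
    have h1 : (1:ℝ) ≤ (z - y) / d := (one_le_div hd0).2 hdz
    have h2 : 1 ≤ q := by rw [hq_def]; exact Nat.le_floor (by push_cast; linarith)
    exact_mod_cast h2
  have hqd_le : (q:ℝ) * d ≤ z - y := by
    have h1 : (q:ℝ) ≤ (z - y) / d := by rw [hq_def]; exact Nat.floor_le (by positivity)
    calc (q:ℝ) * d ≤ ((z - y)/d) * d := mul_le_mul_of_nonneg_right h1 hd0.le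
      _ = z - y := by field_simp
  have hqd_gt : z - y < (q:ℝ) * d + d := by
    have h1 : (z - y) / d < (q:ℝ) + 1 := by rw [hq_def]; exact Nat.lt_floor_add_one _
    have := mul_lt_mul_of_pos_right h1 hd0
    rw [div_mul_cancel₀ _ hd0.ne'] at this
    linarith
  have tel1 : ∑ i ∈ range p, (F (x + ((i:ℝ) + 1) * d) - F (x + i * d)) = F y - F x := by
    have h := Finset.sum_range_sub (fun i : ℕ => F (x + i * d)) p
    push_cast at h
    rw [h, show x + (p:ℝ) * d = y from by rw [hpd]; ring]
    norm_num
  have tel2 : ∑ j ∈ range q, (F (y + ((j:ℝ) + 1) * d) - F (y + j * d)) = F (y + q * d) - F y := by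
    have h := Finset.sum_range_sub (fun j : ℕ => F (y + j * d)) q
    push_cast at h
    rw [h]
    norm_num
  have step : ∀ i : ℕ, i < p → ∀ j : ℕ, F (x + ((i:ℝ) + 1) * d) - F (x + i * d)
      ≤ F (y + ((j:ℝ) + 1) * d) - F (y + j * d) := by
    intro i hi j
    have hip : (i:ℝ) ≤ (p:ℝ) := by exact_mod_cast hi.le
    have hj0 : (0:ℝ) ≤ (j:ℝ) := Nat.cast_nonneg j
    have h1 : x + (i:ℝ) * d ≤ y + (j:ℝ) * d := by nlinarith [hd0.le, hpd]
    have h2 := wright (x + i * d) (y + j * d) d (by positivity) h1 hd0.le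
    rw [show x + ((i:ℝ) + 1) * d = (x + i * d) + d from by ring,
        show y + ((j:ℝ) + 1) * d = (y + j * d) + d from by ring]
    exact h2
  have key1 : ∀ j : ℕ, j < q → F y - F x ≤ (p:ℝ) * (F (y + ((j:ℝ) + 1) * d) - F (y + j * d)) := by
    intro j _
    rw [← tel1]
    calc ∑ i ∈ range p, (F (x + ((i:ℝ) + 1) * d) - F (x + i * d))
        ≤ ∑ _i ∈ range p, (F (y + ((j:ℝ) + 1) * d) - F (y + j * d)) :=
          Finset.sum_le_sum (fun i hi => step i (Finset.mem_range.1 hi) j)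
      _ = (p:ℝ) * (F (y + ((j:ℝ) + 1) * d) - F (y + j * d)) := by
          rw [Finset.sum_const, Finset.card_range, nsmul_eq_mul]
  have key2 : (q:ℝ) * (F y - F x) ≤ (p:ℝ) * (F (y + q * d) - F y) := by
    calc (q:ℝ) * (F y - F x) = ∑ _j ∈ range q, (F y - F x) := by
          rw [Finset.sum_const, Finset.card_range, nsmul_eq_mul]
      _ ≤ ∑ j ∈ range q, (p:ℝ) * (F (y + ((j:ℝ) + 1) * d) - F (y + j * d)) :=
          Finset.sum_le_sum (fun j hj => key1 j (Finset.mem_range.1 hj))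
      _ = (p:ℝ) * (F (y + q * d) - F y) := by rw [← Finset.mul_sum, tel2]
  have hm : F (y + q * d) ≤ F z := by
    apply mono _ _ (by positivity)
    linarith
  have hq2 : (q:ℝ) * (F y - F x) ≤ (p:ℝ) * (F z - F y) := by
    refine key2.trans ?_
    apply mul_le_mul_of_nonneg_left (by linarith) hp0.le
  have hd_ineq : (q:ℝ) * d * (F y - F x) ≤ (y - x) * (F z - F y) := by
    calc (q:ℝ) * d * (F y - F x) = d * ((q:ℝ) * (F y - F x)) := by ring
      _ ≤ d * ((p:ℝ) * (F z - F y)) := mul_le_mul_of_nonneg_left hq2 hd0.le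
      _ = ((p:ℝ) * d) * (F z - F y) := by ring
      _ = (y - x) * (F z - F y) := by rw [hpd]
  calc (F y - F x) * (z - y) ≤ (F y - F x) * ((q:ℝ) * d + d) :=
        mul_le_mul_of_nonneg_left hqd_gt.le hFyx
    _ = (q:ℝ) * d * (F y - F x) + d * (F y - F x) := by ring
    _ ≤ (y - x) * (F z - F y) + ε := add_le_add hd_ineq hdε
    _ = (F z - F y) * (y - x) + ε := by ring

end OutageThm6

open OutageThm6 in
/-- Theorem 6 of the paper: the function `g₀(R)` (stated here, via Remark 1, through its
integral representation `F(R)` over the outage region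
`D_R = {λ : λᵢ > 0, ∏ (1 + λᵢ) ≤ 2^R}`) is monotonically nondecreasing and convex in the
transmission rate `R` on `[0, ∞)`. -/
theorem outage_integral_monotone_convex (Nt Nr : ℕ) (h1 : 1 ≤ Nr) (h2 : Nr ≤ Nt) :
    MonotoneOn (fun R : ℝ =>
      ∫ v in {v : Fin Nr → ℝ | (∀ i, 0 < v i) ∧ ∏ i, (1 + v i) ≤ (2 : ℝ) ^ R},
        (∏ i, ∏ j ∈ Ioi i, (v j - v i)) ^ 2 * ∏ i, v i ^ (Nt - Nr)) (Set.Ici 0) ∧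
    ConvexOn ℝ (Set.Ici 0) (fun R : ℝ =>
      ∫ v in {v : Fin Nr → ℝ | (∀ i, 0 < v i) ∧ ∏ i, (1 + v i) ≤ (2 : ℝ) ^ R},
        (∏ i, ∏ j ∈ Ioi i, (v j - v i)) ^ 2 * ∏ i, v i ^ (Nt - Nr)) := by
  have hfun : (fun R : ℝ =>
      ∫ v in {v : Fin Nr → ℝ | (∀ i, 0 < v i) ∧ ∏ i, (1 + v i) ≤ (2 : ℝ) ^ R},
        (∏ i, ∏ j ∈ Ioi i, (v j - v i)) ^ 2 * ∏ i, v i ^ (Nt - Nr))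
      = fun R : ℝ => (L Nt Nr R).toReal := by
    funext R
    exact F_eq Nt Nr R
  rw [hfun]
  have mono : ∀ u v : ℝ, 0 ≤ u → u ≤ v → (L Nt Nr u).toReal ≤ (L Nt Nr v).toReal := by
    intro u v _ huv
    exact ENNReal.toReal_mono (L_lt_top Nt Nr v).ne (lintegral_mono_set (A_mono Nr huv))
  constructor
  · intro u _ v _ huv
    exact mono u v ‹u ∈ Set.Ici 0› huv
  · exact convexOn_of_wright _ (fun u v hu huv => mono u v hu huv)
      (fun u v h _ huv hh => wright Nt Nr h1 huv hh)
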